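/- arXiv:2412.04042 — 2 statements merged into one kernel-verified Lean document; each statement's English description precedes it below -/
import Mathlib

section
/- Let G = (X ∪ Y, E) be a bipartite graph, <_X a linear order on X, and k ≥ 0. If v ∈ X has degree greater than 2k+2 and has a leaf neighbor y ∈ Y, then there exists a linear order <_Y on Y making (<_X, <_Y) a 2-layer k-planar drawing of G if and only if there exists a linear order <_Y' on Y∖{y} making (<_X, <_Y') a 2-layer k-planar drawing of G − y. -/
open Function

/-- Two edges of a 2-layer drawing cross. -/
def cross2 {X Y : Type*} (πX : X → ℕ) (πY : Y → ℕ) (e f : X × Y) : Prop :=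
  (πX e.1 < πX f.1 ∧ πY f.2 < πY e.2) ∨ (πX f.1 < πX e.1 ∧ πY e.2 < πY f.2)

/-- A 2-layer drawing is `k`-planar: every edge is crossed by at most `k` edges. -/
def TwoLayerKPlanar {X Y : Type*} (k : ℕ) (πX : X → ℕ) (πY : Y → ℕ)
    (E : Set (X × Y)) : Prop :=
  ∀ e ∈ E, {f | f ∈ E ∧ cross2 πX πY e f}.ncard ≤ k

lemma cross2_symm {X Y : Type*} (πX : X → ℕ) (πY : Y → ℕ) (e f : X × Y) :
    cross2 πX πY e f ↔ cross2 πX πY f e := by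
  unfold cross2; tauto

/-- Order statistic: a finset of naturals of size ≥ 2k+2 has an element with
k+1 elements ≤ it and k+1 elements above it. -/
lemma exists_middle (T : Finset ℕ) (k : ℕ) (h : 2 * k + 2 ≤ T.card) :
    ∃ s ∈ T, k + 1 ≤ (T.filter (· ≤ s)).card ∧ k + 1 ≤ (T.filter (s < ·)).card := by
  have hk : k < T.card := by omega
  let f := T.orderEmbOfFin (rfl : T.card = T.card)
  have hmem : ∀ i, f i ∈ T := fun i => T.orderEmbOfFin_mem rfl i
  refine ⟨f ⟨k, hk⟩, hmem _, ?_, ?_⟩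
  · have := Finset.card_le_card_of_injOn
      (fun j : Fin (k + 1) => f (Fin.castLE (by omega) j))
      (t := T.filter (· ≤ f ⟨k, hk⟩)) ?_ ?_ (s := Finset.univ)
    · simpa using this
    · intro j _
      simp only [Finset.mem_coe, Finset.mem_filter]
      refine ⟨hmem _, f.monotone ?_⟩
      show (j : ℕ) ≤ k
      omega
    · intro a _ b _ hab
      exact Fin.castLE_injective _ (f.injective hab)
  · have := Finset.card_le_card_of_injOn
      (fun j : Fin (k + 1) => f ⟨k + 1 + j, by omega⟩)
      (t := T.filter (f ⟨k, hk⟩ < ·)) ?_ ?_ (s := Finset.univ)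
    · simpa using this
    · intro j _
      simp only [Finset.mem_coe, Finset.mem_filter]
      refine ⟨hmem _, f.strictMono ?_⟩
      show k < k + 1 + (j : ℕ)
      omega
    · intro a _ b _ hab
      have h1 := f.injective hab
      have h2 : k + 1 + (a : ℕ) = k + 1 + (b : ℕ) := congrArg Fin.val h1
      exact Fin.ext (by omega)

/-- If `v ∈ X` has degree greater than `2k+2` and has a leaf neighbor `y0 ∈ Y`,
then (for the fixed order `πX` on `X`) `G` has a 2-layer `k`-planar drawing iff
`G - y0` has one. -/
theorem stmt1 {X Y : Type*} [Fintype X] [Fintype Y] (E : Set (X × Y)) (k : ℕ)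
    (πX : X → ℕ) (hπX : Injective πX) (v : X) (y0 : Y)
    (hdeg : 2 * k + 2 < {y : Y | (v, y) ∈ E}.ncard)
    (hvy : (v, y0) ∈ E) (hleaf : {x : X | (x, y0) ∈ E}.ncard = 1) :
    (∃ πY : Y → ℕ, Injective πY ∧ TwoLayerKPlanar k πX πY E) ↔
    (∃ πY : Y → ℕ, Set.InjOn πY {y | y ≠ y0} ∧
        TwoLayerKPlanar k πX πY {f | f ∈ E ∧ f.2 ≠ y0}) := by
  classical
  -- the leaf property: any edge into y0 is (v, y0)
  have hleafset : {x : X | (x, y0) ∈ E} = {v} := by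
    obtain ⟨a, ha⟩ := Set.ncard_eq_one.mp hleaf
    have hv : v ∈ {x : X | (x, y0) ∈ E} := hvy
    rw [ha] at hv
    rw [ha, hv]
  have hedge_y0 : ∀ g ∈ E, (g : X × Y).2 = y0 → g = (v, y0) := by
    intro g hg hgy
    have h1 : g.1 ∈ {x : X | (x, y0) ∈ E} := by
      show (g.1, y0) ∈ E
      rw [← hgy]
      simpa using hg
    rw [hleafset] at h1
    have h2 : g = (g.1, g.2) := rfl
    rw [h2, h1, hgy]
  constructor
  · rintro ⟨πY, hinj, hpl⟩
    refine ⟨πY, hinj.injOn, ?_⟩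
    intro e he
    have hsub : {f | f ∈ {f : X × Y | f ∈ E ∧ f.2 ≠ y0} ∧ cross2 πX πY e f}
        ⊆ {f | f ∈ E ∧ cross2 πX πY e f} := fun f hf => ⟨hf.1.1, hf.2⟩
    exact le_trans (Set.ncard_le_ncard hsub (Set.toFinite _)) (hpl e he.1)
  · rintro ⟨πY, hinj, hpl⟩
    set E' : Set (X × Y) := {f : X × Y | f ∈ E ∧ f.2 ≠ y0} with hE'
    set N : Set Y := {y : Y | (v, y) ∈ E ∧ y ≠ y0} with hN
    have hNfin : N.Finite := Set.toFinite _
    have hinjN : Set.InjOn πY N := hinj.mono (fun y hy => hy.2)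
    have hNcard : 2 * k + 2 ≤ N.ncard := by
      have h1 : {y : Y | (v, y) ∈ E} ⊆ insert y0 N := by
        intro y hy
        by_cases h : y = y0
        · exact Or.inl h
        · exact Or.inr ⟨hy, h⟩
      have h2 := Set.ncard_le_ncard h1 (Set.toFinite _)
      have h3 := Set.ncard_insert_le y0 N
      omega
    -- the finset of positions of neighbors of v (other than y0)
    set T : Finset ℕ := hNfin.toFinset.image πY with hT
    have hTcard : T.card = N.ncard := by
      rw [hT, Finset.card_image_of_injOn (by rwa [Set.Finite.coe_toFinset]),
        ← Set.ncard_eq_toFinset_card _ hNfin]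
    obtain ⟨s, hsT, hlow, hhigh⟩ := exists_middle T k (by omega)
    -- connect filtered finsets with sets of neighbors
    have hcount : ∀ P : ℕ → Prop, ∀ _ : DecidablePred P,
        (T.filter P).card ≤ {y ∈ N | P (πY y)}.ncard := by
      intro P _
      have himg : T.filter P = (hNfin.toFinset.filter (fun y => P (πY y))).image πY := by
        rw [hT, Finset.filter_image]
      rw [himg, Finset.card_image_of_injOn]
      · apply le_of_eq
        rw [Set.ncard_eq_toFinset_card _ (Set.toFinite _)]
        congr 1
        ext y
        simp [Set.Finite.mem_toFinset, hN]
      · intro a ha b hb hab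
        simp only [Finset.coe_filter, Set.mem_setOf_eq, Set.Finite.mem_toFinset] at ha hb
        exact hinjN ha.1 hb.1 hab
    -- new order: put y0 just after position s
    set πY' : Y → ℕ := fun y => if y = y0 then 2 * s + 1 else 2 * πY y with hπY'
    have hπY'y0 : πY' y0 = 2 * s + 1 := by simp [hπY']
    have hπY'ne : ∀ y, y ≠ y0 → πY' y = 2 * πY y := by
      intro y hy; simp [hπY', hy]
    have hinj' : Injective πY' := by
      intro a b hab
      by_cases ha : a = y0 <;> by_cases hb : b = y0
      · rw [ha, hb]
      · rw [ha, hπY'y0, hπY'ne b hb] at hab; omega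
      · rw [hb, hπY'y0, hπY'ne a ha] at hab; omega
      · rw [hπY'ne a ha, hπY'ne b hb] at hab
        exact hinj ha hb (by omega)
    -- main lemma: nothing crosses the new edge (v, y0)
    have nocross : ∀ f ∈ E, ¬ cross2 πX πY' (v, y0) f := by
      rintro ⟨x, y⟩ hf hc
      have hxv : x ≠ v := by
        rintro rfl
        rcases hc with ⟨h, -⟩ | ⟨h, -⟩ <;> exact lt_irrefl _ h
      have hyy0 : y ≠ y0 := by
        intro hyy
        exact hxv (congrArg Prod.fst (hedge_y0 (x, y) hf hyy))
      have hfe' : (x, y) ∈ E' := ⟨hf, hyy0⟩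
      have hple := hpl (x, y) hfe'
      simp only [cross2, hπY'y0, hπY'ne y hyy0] at hc
      rcases hc with ⟨hvx, hys⟩ | ⟨hxv', hsy⟩
      · -- v < x and πY y ≤ s: (x,y) crosses all (v,y') with s < πY y'
        have hys' : πY y ≤ s := by simpa using Nat.lt_succ_iff.mp (by omega)
        have hsub : ∀ y' ∈ {y' ∈ N | s < πY y'},
            (fun y' => ((v, y') : X × Y)) y' ∈ {g | g ∈ E' ∧ cross2 πX πY (x, y) g} := by
          rintro y' ⟨hy'N, hy's⟩
          refine ⟨⟨hy'N.1, hy'N.2⟩, Or.inr ⟨by simpa using hvx, by simp; omega⟩⟩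
        have hle := Set.ncard_le_ncard_of_injOn _ hsub
          (fun a _ b _ hab => by simpa using hab) (Set.toFinite _)
        have := hcount (fun t => s < t) inferInstance
        omega
      · -- x < v and s < πY y: (x,y) crosses all (v,y') with πY y' ≤ s
        have hsy' : s < πY y := by omega
        have hsub : ∀ y' ∈ {y' ∈ N | πY y' ≤ s},
            (fun y' => ((v, y') : X × Y)) y' ∈ {g | g ∈ E' ∧ cross2 πX πY (x, y) g} := by
          rintro y' ⟨hy'N, hy's⟩
          refine ⟨⟨hy'N.1, hy'N.2⟩, Or.inl ⟨by simpa using hxv', by simp; omega⟩⟩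
        have hle := Set.ncard_le_ncard_of_injOn _ hsub
          (fun a _ b _ hab => by simpa using hab) (Set.toFinite _)
        have := hcount (fun t => t ≤ s) inferInstance
        omega
    refine ⟨πY', hinj', ?_⟩
    intro e he
    by_cases he2 : e.2 = y0
    · -- e is the new edge (v, y0); nothing crosses it
      have heq : e = (v, y0) := hedge_y0 e he he2
      have : {f | f ∈ E ∧ cross2 πX πY' e f} = ∅ := by
        ext f
        simp only [Set.mem_setOf_eq, Set.mem_empty_iff_false, iff_false, not_and]
        intro hf hc
        exact nocross f hf (heq ▸ hc)
      rw [this]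
      simp
    · -- e is an old edge; its crossings are unchanged
      have hee' : e ∈ E' := ⟨he, he2⟩
      have hsub : {f | f ∈ E ∧ cross2 πX πY' e f} ⊆ {f | f ∈ E' ∧ cross2 πX πY e f} := by
        rintro ⟨x, y⟩ ⟨hf, hc⟩
        have hyy0 : y ≠ y0 := by
          intro hyy
          have heq : ((x, y) : X × Y) = (v, y0) := hedge_y0 (x, y) hf hyy
          rw [heq] at hc
          exact nocross e he ((cross2_symm _ _ _ _).mpr hc)
        refine ⟨⟨hf, hyy0⟩, ?_⟩
        obtain ⟨e1, e2⟩ := e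
        simp only at he2
        simp only [cross2, hπY'ne _ he2, hπY'ne _ hyy0] at hc ⊢
        omega
      exact le_trans (Set.ncard_le_ncard hsub (Set.toFinite _)) (hpl e hee')
end

section
/- Let D be an outer k-planar drawing of a graph G and let {u, v} be a pair of distinct vertices such that some edge {l, r} of G pierces {u, v} in D. Then there are at most k+2 internally vertex-disjoint paths between u and v in G. -/
open Function

/-- Position of the lower endpoint of an edge in a circular drawing given by
vertex positions `π`. -/
def elo {V : Type*} (π : V → ℕ) : Sym2 V → ℕ :=
  Sym2.lift ⟨fun a b => min (π a) (π b), fun a b => min_comm (π a) (π b)⟩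

/-- Position of the upper endpoint of an edge in a circular drawing. -/
def ehi {V : Type*} (π : V → ℕ) : Sym2 V → ℕ :=
  Sym2.lift ⟨fun a b => max (π a) (π b), fun a b => max_comm (π a) (π b)⟩

/-- Two edges (or vertex pairs) cross (equivalently, the first pierces the
second) in the circular drawing given by positions `π`:
`i < i' < j < j'` or `i' < i < j' < j`. -/
def ecross {V : Type*} (π : V → ℕ) (e f : Sym2 V) : Prop :=
  (elo π e < elo π f ∧ elo π f < ehi π e ∧ ehi π e < ehi π f) ∨
  (elo π f < elo π e ∧ elo π e < ehi π f ∧ ehi π f < ehi π e)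

/-- The number of edges of `G` crossing `e` in the circular drawing `π`. -/
noncomputable def crossNum {V : Type*} (G : SimpleGraph V) (π : V → ℕ)
    (e : Sym2 V) : ℕ :=
  {f | f ∈ G.edgeSet ∧ ecross π e f}.ncard

/-- `π` is an outer `k`-planar drawing of `G`: an injective assignment of
positions (a circular order) such that every edge crosses at most `k` edges. -/
def IsOuterKPlanar {V : Type*} (G : SimpleGraph V) (k : ℕ) (π : V → ℕ) : Prop :=
  Injective π ∧ ∀ e ∈ G.edgeSet, crossNum G π e ≤ k

lemma elo_mk {V : Type*} (π : V → ℕ) (a b : V) :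
    elo π s(a, b) = min (π a) (π b) := rfl

lemma ehi_mk {V : Type*} (π : V → ℕ) (a b : V) :
    ehi π s(a, b) = max (π a) (π b) := rfl

/-- A walk whose support avoids positions `lo` and `hi`, from a vertex inside
`(lo, hi)` to one outside (or vice versa), contains an edge whose interval
properly crosses `(lo, hi)`. -/
lemma exists_cross_edge {V : Type*} {G : SimpleGraph V} (π : V → ℕ) (lo hi : ℕ)
    {a b : V} (w : G.Walk a b)
    (havoid : ∀ x ∈ w.support, π x ≠ lo ∧ π x ≠ hi)
    (hab : ¬ ((lo < π a ∧ π a < hi) ↔ (lo < π b ∧ π b < hi))) :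
    ∃ x y, s(x, y) ∈ w.edges ∧
      ((lo < min (π x) (π y) ∧ min (π x) (π y) < hi ∧ hi < max (π x) (π y)) ∨
       (min (π x) (π y) < lo ∧ lo < max (π x) (π y) ∧ max (π x) (π y) < hi)) := by
  induction w with
  | nil => exact absurd Iff.rfl hab
  | @cons a c b h p ih =>
    have hx : π a ≠ lo ∧ π a ≠ hi := havoid a (by simp)
    have hy : π c ≠ lo ∧ π c ≠ hi :=
      havoid c (by simp [SimpleGraph.Walk.support_cons])
    by_cases hmix : (lo < π a ∧ π a < hi) ↔ (lo < π c ∧ π c < hi)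
    · have hcb : ¬ ((lo < π c ∧ π c < hi) ↔ (lo < π b ∧ π b < hi)) := by
        tauto
      obtain ⟨x, y, hmem, hcr⟩ := ih
        (fun x hx => havoid x (by simp [SimpleGraph.Walk.support_cons, hx])) hcb
      exact ⟨x, y, by simp [SimpleGraph.Walk.edges_cons, hmem], hcr⟩
    · refine ⟨a, c, by simp [SimpleGraph.Walk.edges_cons], ?_⟩
      omega

/-- A path from `u` to `v` that uses the edge `{u, v}` is the single-edge
path. -/
lemma path_single_edge {V : Type*} {G : SimpleGraph V} {u v : V} (huv : u ≠ v)
    (hadj : G.Adj u v) (p : G.Walk u v) (hp : p.IsPath)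
    (h : s(u, v) ∈ p.edges) :
    p = SimpleGraph.Walk.cons hadj SimpleGraph.Walk.nil := by
  cases p with
  | nil => simp at h
  | @cons _ w _ h' q =>
    rw [SimpleGraph.Walk.edges_cons, List.mem_cons] at h
    rcases h with h | h
    · rcases Sym2.eq_iff.mp h with ⟨-, rfl⟩ | ⟨rfl, rfl⟩
      · have hq : q.IsPath := hp.of_cons
        rw [SimpleGraph.Walk.isPath_iff_eq_nil.mp hq]
      · exact absurd rfl huv
    · have hu : u ∈ q.support := SimpleGraph.Walk.fst_mem_support_of_mem_edges q h
      have := (SimpleGraph.Walk.cons_isPath_iff h' q).mp hp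
      exact absurd hu this.2

/-- If in an outer `k`-planar drawing some edge `{l, r}` of `G` pierces the
vertex pair `{u, v}`, then there are at most `k+2` pairwise internally
vertex-disjoint paths between `u` and `v`. -/
theorem stmt15 {V : Type*} [Fintype V] (G : SimpleGraph V) (k : ℕ)
    (π : V → ℕ) (hD : IsOuterKPlanar G k π)
    (u v : V) (huv : u ≠ v) (l r : V) (hlr : G.Adj l r)
    (hpierce : ecross π s(l, r) s(u, v))
    (m : ℕ) (P : Fin m → G.Walk u v)
    (hpath : ∀ i, (P i).IsPath) (hinj : Function.Injective P)
    (hdisj : ∀ i j, i ≠ j → ∀ x, x ∈ (P i).support → x ∈ (P j).support →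
      x = u ∨ x = v) :
    m ≤ k + 2 := by
  classical
  obtain ⟨hπ, hcross⟩ := hD
  have hp := hpierce
  simp only [ecross, elo_mk, ehi_mk] at hp
  set lo := min (π l) (π r) with hlo
  set hi := max (π l) (π r) with hhi
  -- distinctness of the four vertices' positions
  have hul : u ≠ l := fun h => by rw [h] at hp; omega
  have hur : u ≠ r := fun h => by rw [h] at hp; omega
  have hvl : v ≠ l := fun h => by rw [h] at hp; omega
  have hvr : v ≠ r := fun h => by rw [h] at hp; omega
  -- the set of crossing edges
  set F : Set (Sym2 V) := {f | f ∈ G.edgeSet ∧ ecross π s(l, r) f} with hF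
  have hFfin : F.Finite := Set.toFinite _
  have hFk : hFfin.toFinset.card ≤ k := by
    have h1 : F.ncard ≤ k := hcross s(l, r) ((SimpleGraph.mem_edgeSet G).mpr hlr)
    rwa [Set.ncard_eq_toFinset_card F hFfin] at h1
  -- every path avoiding l and r contains a crossing edge
  have key : ∀ i : Fin m, l ∉ (P i).support → r ∉ (P i).support →
      ∃ f ∈ hFfin.toFinset, f ∈ (P i).edges := by
    intro i hl hr
    have havoid : ∀ x ∈ (P i).support, π x ≠ lo ∧ π x ≠ hi := by
      intro x hx
      have h1 : π x ≠ π l := fun h => hl (hπ h ▸ hx)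
      have h2 : π x ≠ π r := fun h => hr (hπ h ▸ hx)
      omega
    have hab : ¬ ((lo < π u ∧ π u < hi) ↔ (lo < π v ∧ π v < hi)) := by omega
    obtain ⟨x, y, hmem, hcr⟩ := exists_cross_edge π lo hi (P i) havoid hab
    refine ⟨s(x, y), ?_, hmem⟩
    rw [Set.Finite.mem_toFinset]
    refine ⟨(P i).edges_subset_edgeSet hmem, ?_⟩
    simp only [ecross, elo_mk, ehi_mk]
    omega
  -- bucket the paths
  set I1 : Finset (Fin m) := Finset.univ.filter (fun i => l ∈ (P i).support)
  set I2 : Finset (Fin m) := Finset.univ.filter (fun i => r ∈ (P i).support)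
  set I3 : Finset (Fin m) :=
    Finset.univ.filter (fun i => l ∉ (P i).support ∧ r ∉ (P i).support)
  have hcover : (Finset.univ : Finset (Fin m)) ⊆ I1 ∪ I2 ∪ I3 := by
    intro i _
    simp only [I1, I2, I3, Finset.mem_union, Finset.mem_filter, Finset.mem_univ,
      true_and]
    tauto
  have hI1 : I1.card ≤ 1 := by
    refine Finset.card_le_one.mpr (fun i hi j hj => ?_)
    by_contra hne
    simp only [I1, Finset.mem_filter] at hi hj
    rcases hdisj i j hne l hi.2 hj.2 with h | h
    · exact hul h.symm
    · exact hvl h.symm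
  have hI2 : I2.card ≤ 1 := by
    refine Finset.card_le_one.mpr (fun i hi j hj => ?_)
    by_contra hne
    simp only [I2, Finset.mem_filter] at hi hj
    rcases hdisj i j hne r hi.2 hj.2 with h | h
    · exact hur h.symm
    · exact hvr h.symm
  -- choose a crossing edge for each path in I3
  have hchoice : ∀ i ∈ I3, ∃ f ∈ hFfin.toFinset, f ∈ (P i).edges := by
    intro i hi
    simp only [I3, Finset.mem_filter] at hi
    exact key i hi.2.1 hi.2.2
  choose c hcF hcE using hchoice
  have hI3 : I3.card ≤ hFfin.toFinset.card := by
    refine Finset.card_le_card_of_injOn (fun i => if h : i ∈ I3 then c i h else s(u, v))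
      (fun i hi => by have hi : i ∈ I3 := Finset.mem_coe.mp hi; show (if h : i ∈ I3 then c i h else s(u, v)) ∈ (hFfin.toFinset : Set (Sym2 V)); rw [Finset.mem_coe, dif_pos hi]; exact hcF i hi) ?_
    intro i hi' j hj' hij'
    have hi : i ∈ I3 := Finset.mem_coe.mp hi'
    have hj : j ∈ I3 := Finset.mem_coe.mp hj'
    have hij : (if h : i ∈ I3 then c i h else s(u, v))
        = (if h : j ∈ I3 then c j h else s(u, v)) := hij'
    rw [dif_pos hi, dif_pos hj] at hij
    by_contra hne
    -- the common edge has both endpoints in both supports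
    obtain ⟨⟨x, y⟩, hxy⟩ := Quot.exists_rep (c i hi)
    have hxy' : c i hi = s(x, y) := hxy.symm
    have hEi : s(x, y) ∈ (P i).edges := hxy' ▸ hcE i hi
    have hEj : s(x, y) ∈ (P j).edges := by
      rw [← hxy', hij]; exact hcE j hj
    have hadjxy : G.Adj x y := (P i).edges_subset_edgeSet hEi
    have hxne : x ≠ y := hadjxy.ne
    have hxu := hdisj i j hne x (SimpleGraph.Walk.fst_mem_support_of_mem_edges _ hEi)
      (SimpleGraph.Walk.fst_mem_support_of_mem_edges _ hEj)
    have hyu := hdisj i j hne y (SimpleGraph.Walk.snd_mem_support_of_mem_edges _ hEi)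
      (SimpleGraph.Walk.snd_mem_support_of_mem_edges _ hEj)
    have heq : s(x, y) = s(u, v) := by
      rcases hxu with rfl | rfl <;> rcases hyu with rfl | rfl
      · exact absurd rfl hxne
      · rfl
      · exact Sym2.eq_swap
      · exact absurd rfl hxne
    have hadjuv : G.Adj u v :=
      (SimpleGraph.mem_edgeSet G).mp (heq ▸ (P i).edges_subset_edgeSet hEi)
    have hPi : P i = SimpleGraph.Walk.cons hadjuv SimpleGraph.Walk.nil :=
      path_single_edge huv hadjuv (P i) (hpath i) (heq ▸ hEi)
    have hPj : P j = SimpleGraph.Walk.cons hadjuv SimpleGraph.Walk.nil :=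
      path_single_edge huv hadjuv (P j) (hpath j) (heq ▸ hEj)
    exact hne (hinj (hPi.trans hPj.symm))
  calc m = (Finset.univ : Finset (Fin m)).card := (Finset.card_fin m).symm
    _ ≤ (I1 ∪ I2 ∪ I3).card := Finset.card_le_card hcover
    _ ≤ I1.card + I2.card + I3.card :=
        le_trans (Finset.card_union_le _ _)
          (by exact Nat.add_le_add_right (Finset.card_union_le _ _) _)
    _ ≤ 1 + 1 + k := by
        have := hFk; omega
    _ = k + 2 := by omega
end
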